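/- Let m = 2n+k, ξ = exp(2πi/m), and for x = (x_0, x_1, …, x_r) ∈ ℝ × ℂ^r define the polynomial p(z) = x_r + x_{r-1} z + … + x_1 z^{r-1} + 2x_0 z^r + conj(x_1) z^{r+1} + … + conj(x_r) z^{2r}. Then for v_j = (1, ξ^j, ξ^{2j}, …, ξ^{rj}) ∈ ℝ × ℂ^r, the real inner product ⟨x, v_j⟩ vanishes if and only if p(ξ^j) = 0. In particular, if x ≠ 0 then ⟨x, v_j⟩ = 0 for at most 2r values of j ∈ {0,…,m-1}. -/

import Mathlib

open scoped Classical

open Polynomial in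
/-- With `m = 2n+k`, `k = 2r`, `ξ = exp(2πi/m)`,
`v_j = (1, ξ^j, …, ξ^{rj}) ∈ ℝ × ℂ^r`, and
`p(z) = x_r + x_{r-1}z + … + x_1 z^{r-1} + 2x_0 z^r + conj(x_1)z^{r+1} + … + conj(x_r)z^{2r}`,
the real inner product `⟨x, v_j⟩` vanishes iff `p(ξ^j) = 0`; in particular for `x ≠ 0`
it vanishes for at most `2r` values of `j ∈ {0,…,m-1}`. -/
theorem stmt6 (n k r m : ℕ) (hk : k = 2 * r) (hm : m = 2 * n + k) (hkm : k < m)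
    (x : ℝ × (Fin r → ℂ)) :
    let ξ : ℂ := Complex.exp (2 * (Real.pi : ℂ) * Complex.I / (m : ℂ))
    let v : ℕ → ℝ × (Fin r → ℂ) := fun j => (1, fun i => ξ ^ (((i : ℕ) + 1) * j))
    let ip : (ℝ × (Fin r → ℂ)) → (ℝ × (Fin r → ℂ)) → ℝ := fun x y =>
      x.1 * y.1 + ∑ i, (x.2 i * (starRingEnd ℂ) (y.2 i)).re
    let p : ℂ → ℂ := fun z => 2 * (x.1 : ℂ) * z ^ r +
      ∑ i : Fin r, (x.2 i * z ^ (r - ((i : ℕ) + 1))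
        + (starRingEnd ℂ) (x.2 i) * z ^ (r + ((i : ℕ) + 1)))
    (∀ j < m, (ip x (v j) = 0 ↔ p (ξ ^ j) = 0)) ∧
      (x ≠ 0 → ((Finset.range m).filter fun j => ip x (v j) = 0).card ≤ 2 * r) := by
  intro ξ v ip p
  have hm0 : m ≠ 0 := by omega
  have hξne : ξ ≠ 0 := Complex.exp_ne_zero _
  have hξabs : ‖ξ‖ = 1 := by
    show ‖(Complex.exp (2 * (Real.pi : ℂ) * Complex.I / (m : ℂ)))‖ = 1
    rw [show (2 * (Real.pi : ℂ) * Complex.I / (m : ℂ)) = ((2 * Real.pi / m : ℝ) : ℂ) * Complex.I by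
      push_cast; ring]
    exact Complex.norm_exp_ofReal_mul_I _
  have hmc : ξ * (starRingEnd ℂ) ξ = 1 := by
    rw [Complex.mul_conj, Complex.normSq_eq_norm_sq, hξabs]; norm_num
  -- key identity
  have key : ∀ j : ℕ, p (ξ ^ j) = 2 * (ξ ^ j) ^ r * ((ip x (v j) : ℝ) : ℂ) := by
    intro j
    have hterm : ∀ i : Fin r,
        x.2 i * (ξ ^ j) ^ (r - ((i : ℕ) + 1))
          + (starRingEnd ℂ) (x.2 i) * (ξ ^ j) ^ (r + ((i : ℕ) + 1))
        = (ξ ^ j) ^ r * ((2 * (x.2 i * (starRingEnd ℂ) (ξ ^ (((i : ℕ) + 1) * j))).re : ℝ) : ℂ) := by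
      intro i
      set u : ℂ := ξ ^ (((i : ℕ) + 1) * j) with hu
      have huc : u * (starRingEnd ℂ) u = 1 := by
        rw [hu, map_pow, ← mul_pow, hmc, one_pow]
      have hpow : (ξ ^ j) ^ ((i : ℕ) + 1) = u := by
        rw [hu, ← pow_mul, Nat.mul_comm]
      have hle : (i : ℕ) + 1 ≤ r := i.isLt
      have h1 : (ξ ^ j) ^ (r - ((i : ℕ) + 1)) = (ξ ^ j) ^ r * (starRingEnd ℂ) u := by
        have : (ξ ^ j) ^ r = (ξ ^ j) ^ (r - ((i : ℕ) + 1)) * u := by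
          rw [← hpow, ← pow_add, Nat.sub_add_cancel hle]
        rw [this, mul_assoc, huc, mul_one]
      have h2 : (ξ ^ j) ^ (r + ((i : ℕ) + 1)) = (ξ ^ j) ^ r * u := by
        rw [← hpow, pow_add]
      have h3 : ((2 * (x.2 i * (starRingEnd ℂ) u).re : ℝ) : ℂ)
          = x.2 i * (starRingEnd ℂ) u + (starRingEnd ℂ) (x.2 i) * u := by
        rw [show (starRingEnd ℂ) (x.2 i) * u
            = (starRingEnd ℂ) (x.2 i * (starRingEnd ℂ) u) by
          rw [map_mul, Complex.conj_conj]]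
        rw [Complex.add_conj]
      rw [h1, h2, h3]; ring
    simp only [p, ip, v]
    rw [Finset.sum_congr rfl (fun i _ => hterm i)]
    push_cast
    rw [mul_add, Finset.mul_sum]
    rw [show ((ξ:ℂ) ^ j) ^ r = ξ ^ (j * r) from by rw [← pow_mul]] -- normalize
    congr 1
    · ring
    · exact Finset.sum_congr rfl fun i _ => by ring
  constructor
  · intro j _
    rw [key j]
    constructor
    · intro h; rw [h]; simp
    · intro h
      rcases mul_eq_zero.mp h with h' | h'
      · rcases mul_eq_zero.mp h' with h'' | h''
        · norm_num at h''
        · exact absurd h'' (pow_ne_zero _ (pow_ne_zero _ hξne))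
      · exact_mod_cast h'
  · intro hx
    -- the polynomial
    set P : Polynomial ℂ := Polynomial.C (2 * (x.1 : ℂ)) * Polynomial.X ^ r +
      ∑ i : Fin r, (Polynomial.C (x.2 i) * Polynomial.X ^ (r - ((i : ℕ) + 1))
        + Polynomial.C ((starRingEnd ℂ) (x.2 i)) * Polynomial.X ^ (r + ((i : ℕ) + 1))) with hP
    have heval : ∀ z : ℂ, P.eval z = p z := by
      intro z
      simp [hP, p, Polynomial.eval_finset_sum]
    have hPne : P ≠ 0 := by
      have hx' : x.1 ≠ 0 ∨ ∃ i, x.2 i ≠ 0 := by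
        by_contra hc
        push_neg at hc
        exact hx (Prod.ext hc.1 (funext fun i => hc.2 i))
      rcases hx' with h1 | ⟨i0, hi0⟩
      · have hsum : (∑ i : Fin r, ((Polynomial.C (x.2 i) * Polynomial.X ^ (r - ((i : ℕ) + 1))
              + Polynomial.C ((starRingEnd ℂ) (x.2 i)) * Polynomial.X ^ (r + ((i : ℕ) + 1))).coeff r))
            = 0 := by
          apply Finset.sum_eq_zero
          intro i _
          have hle : (i : ℕ) + 1 ≤ r := i.isLt
          have e1 : r - ((i : ℕ) + 1) ≠ r := by omega
          have e2 : r + ((i : ℕ) + 1) ≠ r := by omega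
          simp [Polynomial.coeff_X_pow, e1, e2, e1.symm, e2.symm]
        have hc : P.coeff r = 2 * (x.1 : ℂ) := by
          rw [hP, Polynomial.coeff_add, Polynomial.finset_sum_coeff, hsum, add_zero,
            Polynomial.coeff_C_mul, Polynomial.coeff_X_pow, if_pos rfl, mul_one]
        intro h
        rw [h, Polynomial.coeff_zero] at hc
        have : (x.1 : ℂ) = 0 := by
          field_simp at hc; exact_mod_cast (mul_eq_zero.mp hc.symm).resolve_left two_ne_zero
        exact h1 (by exact_mod_cast this)
      · have hle0 : (i0 : ℕ) + 1 ≤ r := i0.isLt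
        have hsum : (∑ i : Fin r, ((Polynomial.C (x.2 i) * Polynomial.X ^ (r - ((i : ℕ) + 1))
              + Polynomial.C ((starRingEnd ℂ) (x.2 i)) * Polynomial.X ^ (r + ((i : ℕ) + 1))).coeff
                (r - ((i0 : ℕ) + 1))))
            = x.2 i0 := by
          rw [Finset.sum_eq_single i0]
          · have e2 : r + ((i0 : ℕ) + 1) ≠ r - ((i0 : ℕ) + 1) := by omega
            simp [Polynomial.coeff_X_pow, e2, e2.symm]
          · intro i _ hne
            have hle : (i : ℕ) + 1 ≤ r := i.isLt
            have hne' : (i : ℕ) ≠ (i0 : ℕ) := fun h => hne (Fin.ext h)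
            have e1 : r - ((i : ℕ) + 1) ≠ r - ((i0 : ℕ) + 1) := by omega
            have e2 : r + ((i : ℕ) + 1) ≠ r - ((i0 : ℕ) + 1) := by omega
            simp [Polynomial.coeff_X_pow, e1, e2, e1.symm, e2.symm]
          · intro h; exact absurd (Finset.mem_univ i0) h
        have hc : P.coeff (r - ((i0 : ℕ) + 1)) = x.2 i0 := by
          have e0 : r - ((i0 : ℕ) + 1) ≠ r := by omega
          rw [hP, Polynomial.coeff_add, Polynomial.finset_sum_coeff, hsum,
            Polynomial.coeff_C_mul, Polynomial.coeff_X_pow, if_neg e0, mul_zero, zero_add]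
        intro h
        rw [h, Polynomial.coeff_zero] at hc
        exact hi0 hc.symm
    have hdeg : P.natDegree ≤ 2 * r := by
      apply le_trans (Polynomial.natDegree_add_le _ _)
      apply max_le
      · apply le_trans (Polynomial.natDegree_C_mul_le _ _)
        rw [Polynomial.natDegree_X_pow]; omega
      · apply Polynomial.natDegree_sum_le_of_forall_le
        intro i _
        have hle : (i : ℕ) + 1 ≤ r := i.isLt
        apply le_trans (Polynomial.natDegree_add_le _ _)
        apply max_le
        · apply le_trans (Polynomial.natDegree_C_mul_le _ _)
          rw [Polynomial.natDegree_X_pow]; omega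
        · apply le_trans (Polynomial.natDegree_C_mul_le _ _)
          rw [Polynomial.natDegree_X_pow]; omega
    have hprim : IsPrimitiveRoot ξ m := Complex.isPrimitiveRoot_exp m hm0
    have hinj : Set.InjOn (fun j : ℕ => ξ ^ j) ((Finset.range m).filter
        fun j => ip x (v j) = 0) := by
      intro a ha b hb hab
      simp only [Finset.coe_filter, Set.mem_setOf_eq, Finset.mem_range] at ha hb
      exact hprim.pow_inj ha.1 hb.1 hab
    calc ((Finset.range m).filter fun j => ip x (v j) = 0).card
        ≤ P.roots.toFinset.card := by
          apply Finset.card_le_card_of_injOn _ _ hinj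
          intro j hj
          simp only [Finset.coe_filter, Set.mem_setOf_eq, Finset.mem_range] at hj
          have hp0 : p (ξ ^ j) = 0 := by rw [key j, hj.2]; simp
          simp only [Finset.mem_coe, Multiset.mem_toFinset, Polynomial.mem_roots hPne]
          show Polynomial.eval (ξ ^ j) P = 0
          rw [heval]; exact hp0
      _ ≤ Multiset.card P.roots := P.roots.toFinset_card_le
      _ ≤ P.natDegree := P.card_roots'
      _ ≤ 2 * r := hdeg
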